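/- One-step Riccati comparison via augmentation: with the setup of the Riccati monotonicity lemma, if P̃^{(2)} ≥ P̃^{(1)} ≥ 0 (both self-adjoint positive semidefinite) and R > 0, then the Riccati update map P̃ ↦ P̃ − P̃ C*(C P̃ C* + R)⁻¹ C P̃ is monotone: P̃^{(2)} ≥ P̃^{(1)} implies P̃^{(2)} − P̃^{(2)} C*(C P̃^{(2)} C* + R)⁻¹ C P̃^{(2)} ≥ P̃^{(1)} − P̃^{(1)} C*(C P̃^{(1)} C* + R)⁻¹ C P̃^{(1)}. -/

import Mathlib

open ContinuousLinearMap
open scoped RealInnerProductSpace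

/-- The Riccati update map `P̃ ↦ P̃ - P̃ C* (C P̃ C* + R)⁻¹ C P̃`. -/
noncomputable def riccatiUpdate {X : Type*} [NormedAddCommGroup X]
    [InnerProductSpace ℝ X] [CompleteSpace X] {m : ℕ}
    (C : X →L[ℝ] EuclideanSpace ℝ (Fin m))
    (R : EuclideanSpace ℝ (Fin m) →L[ℝ] EuclideanSpace ℝ (Fin m))
    (Pt : X →L[ℝ] X) : X →L[ℝ] X :=
  Pt - Pt ∘L adjoint C ∘L Ring.inverse (C ∘L Pt ∘L adjoint C + R) ∘L C ∘L Pt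

section Aux
variable {X : Type*} [NormedAddCommGroup X] [InnerProductSpace ℝ X] [CompleteSpace X] {m : ℕ}
  (C : X →L[ℝ] EuclideanSpace ℝ (Fin m))
  (R : EuclideanSpace ℝ (Fin m) →L[ℝ] EuclideanSpace ℝ (Fin m))
  (P : X →L[ℝ] X)

lemma riccati_S_apply (w : EuclideanSpace ℝ (Fin m)) :
    (C ∘L P ∘L adjoint C + R) w = C (P (adjoint C w)) + R w := by
  simp [add_apply, comp_apply]

lemma riccati_S_inner (w₁ w₂ : EuclideanSpace ℝ (Fin m)) :
    ⟪w₁, (C ∘L P ∘L adjoint C + R) w₂⟫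
      = ⟪adjoint C w₁, P (adjoint C w₂)⟫ + ⟪w₁, R w₂⟫ := by
  rw [riccati_S_apply, inner_add_right, ← adjoint_inner_left]

lemma riccati_S_unit
    (hRpos : ∀ y : EuclideanSpace ℝ (Fin m), y ≠ 0 → 0 < ⟪y, R y⟫)
    (hPpsd : ∀ v : X, 0 ≤ ⟪v, P v⟫) :
    IsUnit (C ∘L P ∘L adjoint C + R) := by
  set S := C ∘L P ∘L adjoint C + R with hS
  have hpos : ∀ y, y ≠ 0 → 0 < ⟪y, S y⟫ := by
    intro y hy
    rw [hS, riccati_S_inner]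
    have := hRpos y hy
    have := hPpsd (adjoint C y)
    linarith
  have hinj : Function.Injective S := by
    intro a b hab
    by_contra hne
    have h := hpos (a - b) (sub_ne_zero.mpr hne)
    rw [map_sub, hab, sub_self, inner_zero_right] at h
    exact lt_irrefl 0 h
  have hbij : Function.Bijective S :=
    ⟨hinj, (LinearMap.injective_iff_surjective (f := (S : EuclideanSpace ℝ (Fin m) →ₗ[ℝ] EuclideanSpace ℝ (Fin m)))).mp hinj⟩
  let e := (LinearEquiv.ofBijective (S : EuclideanSpace ℝ (Fin m) →ₗ[ℝ] EuclideanSpace ℝ (Fin m)) hbij).toContinuousLinearEquiv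
  exact ⟨e.toUnit, by ext x; rfl⟩

lemma riccati_key (hPsa : IsSelfAdjoint P) (hRsa : IsSelfAdjoint R)
    (hS : IsUnit (C ∘L P ∘L adjoint C + R)) (v : X) (y : EuclideanSpace ℝ (Fin m)) :
    ⟪v - adjoint C y, P (v - adjoint C y)⟫ + ⟪y, R y⟫ - ⟪v, riccatiUpdate C R P v⟫
      = ⟪y - Ring.inverse (C ∘L P ∘L adjoint C + R) (C (P v)),
          (C ∘L P ∘L adjoint C + R)
            (y - Ring.inverse (C ∘L P ∘L adjoint C + R) (C (P v)))⟫ := by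
  set S := C ∘L P ∘L adjoint C + R with hSdef
  set q := C (P v) with hqdef
  set z := Ring.inverse S q with hzdef
  have hPsym : ∀ a b : X, ⟪P a, b⟫ = ⟪a, P b⟫ := by
    intro a b
    conv_lhs => rw [← ContinuousLinearMap.isSelfAdjoint_iff'.mp hPsa]
    rw [adjoint_inner_left]
  have hRsym : ∀ a b : EuclideanSpace ℝ (Fin m), ⟪R a, b⟫ = ⟪a, R b⟫ := by
    intro a b
    conv_lhs => rw [← ContinuousLinearMap.isSelfAdjoint_iff'.mp hRsa]
    rw [adjoint_inner_left]
  have hSsym : ∀ a b : EuclideanSpace ℝ (Fin m), ⟪a, S b⟫ = ⟪b, S a⟫ := by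
    intro a b
    rw [hSdef, riccati_S_inner, riccati_S_inner]
    have e1 : ⟪adjoint C a, P (adjoint C b)⟫ = ⟪adjoint C b, P (adjoint C a)⟫ := by
      rw [real_inner_comm]; exact hPsym _ _
    have e2 : ⟪a, R b⟫ = ⟪b, R a⟫ := by
      rw [real_inner_comm]; exact hRsym _ _
    rw [e1, e2]
  have hq : S z = q := by
    have h1 : S * Ring.inverse S = 1 := Ring.mul_inverse_cancel S hS
    have := congrArg (fun T : EuclideanSpace ℝ (Fin m) →L[ℝ] EuclideanSpace ℝ (Fin m) => T q) h1
    simpa [ContinuousLinearMap.mul_apply] using this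
  have hUv : riccatiUpdate C R P v = P v - P (adjoint C z) := by
    simp [riccatiUpdate, sub_apply, comp_apply, hzdef, hqdef, hSdef]
  have h1 : ⟪v, riccatiUpdate C R P v⟫ = ⟪v, P v⟫ - ⟪z, q⟫ := by
    rw [hUv, inner_sub_right]
    congr 1
    rw [← hPsym, adjoint_inner_right, ← hqdef, real_inner_comm]
  have h2 : ⟪v - adjoint C y, P (v - adjoint C y)⟫
      = ⟪v, P v⟫ - 2 * ⟪y, q⟫ + (⟪y, S y⟫ - ⟪y, R y⟫) := by
    rw [map_sub, inner_sub_left, inner_sub_right, inner_sub_right]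
    have e1 : ⟪adjoint C y, P v⟫ = ⟪y, q⟫ := by rw [adjoint_inner_left, hqdef]
    have e2 : ⟪v, P (adjoint C y)⟫ = ⟪y, q⟫ := by
      rw [← hPsym, adjoint_inner_right, hqdef, real_inner_comm]
    have e3 : ⟪adjoint C y, P (adjoint C y)⟫ = ⟪y, S y⟫ - ⟪y, R y⟫ := by
      rw [hSdef, riccati_S_inner]; ring
    rw [e1, e2, e3]; ring
  have h3 : ⟪y - z, S (y - z)⟫ = ⟪y, S y⟫ - 2 * ⟪y, q⟫ + ⟪z, q⟫ := by
    rw [map_sub, inner_sub_left, inner_sub_right, inner_sub_right]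
    rw [hq, hSsym z y, hq]
    ring
  rw [h1, h2, h3]
  ring

end Aux

/-- One-step monotonicity of the Riccati update map: if `0 ≤ P̃¹ ≤ P̃²` (both
self-adjoint, Loewner order) and `R` is symmetric positive definite, then
`riccatiUpdate C R P̃¹ ≤ riccatiUpdate C R P̃²`. -/
theorem riccati_update_monotone {X : Type*} [NormedAddCommGroup X]
    [InnerProductSpace ℝ X] [CompleteSpace X] {m : ℕ}
    (C : X →L[ℝ] EuclideanSpace ℝ (Fin m))
    (R : EuclideanSpace ℝ (Fin m) →L[ℝ] EuclideanSpace ℝ (Fin m))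
    (hRsa : IsSelfAdjoint R)
    (hRpos : ∀ y : EuclideanSpace ℝ (Fin m), y ≠ 0 → 0 < ⟪y, R y⟫)
    (P1 P2 : X →L[ℝ] X) (hP1sa : IsSelfAdjoint P1) (hP2sa : IsSelfAdjoint P2)
    (hP1pos : ∀ v : X, 0 ≤ ⟪v, P1 v⟫)
    (hle : ∀ v : X, ⟪v, P1 v⟫ ≤ ⟪v, P2 v⟫) :
    ∀ v : X, ⟪v, riccatiUpdate C R P1 v⟫ ≤ ⟪v, riccatiUpdate C R P2 v⟫ := by
  intro v
  have hP2pos : ∀ w : X, 0 ≤ ⟪w, P2 w⟫ := fun w => le_trans (hP1pos w) (hle w)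
  have hS1 : IsUnit (C ∘L P1 ∘L adjoint C + R) := riccati_S_unit C R P1 hRpos hP1pos
  have hS2 : IsUnit (C ∘L P2 ∘L adjoint C + R) := riccati_S_unit C R P2 hRpos hP2pos
  set z2 := Ring.inverse (C ∘L P2 ∘L adjoint C + R) (C (P2 v)) with hz2
  have key1 := riccati_key C R P1 hP1sa hRsa hS1 v z2
  have key2 := riccati_key C R P2 hP2sa hRsa hS2 v z2
  rw [← hz2, sub_self] at key2
  simp only [map_zero, inner_zero_right] at key2
  -- RHS of key1 is nonnegative
  have hpsd : 0 ≤ ⟪z2 - Ring.inverse (C ∘L P1 ∘L adjoint C + R) (C (P1 v)),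
      (C ∘L P1 ∘L adjoint C + R)
        (z2 - Ring.inverse (C ∘L P1 ∘L adjoint C + R) (C (P1 v)))⟫ := by
    rw [riccati_S_inner]
    have h1 := hP1pos (adjoint C (z2 - Ring.inverse (C ∘L P1 ∘L adjoint C + R) (C (P1 v))))
    rcases eq_or_ne (z2 - Ring.inverse (C ∘L P1 ∘L adjoint C + R) (C (P1 v))) 0 with h | h
    · rw [h]; simp
    · have := hRpos _ h; linarith
  have hmono := hle (v - adjoint C z2)
  linarith
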